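/- For every integer k ≥ 3, the graph G^3_k(p,q) is triangle-free, satisfies χ(G^3_k(p,q)) = k + 1, and in every proper (k+1)-coloring of G^3_k(p,q), the vertices p and q receive distinct colors. -/

import Mathlib

open SimpleGraph

/-- The double Mycielskian of `H`: `Sum.inl x` is the original vertex `x`,
`Sum.inr (Sum.inl (i, x))` is the copy `x_{i}` of `x` in the independent set `V_i`
(for `i : Bool`), and `Sum.inr (Sum.inr i)` is the apex `x_i` dominating `V_i`.
A copy `y_i` is adjacent to an original vertex `z` exactly when `yz` is an edge of `H`,
the two apexes are adjacent, and the apex of side `i` is complete to `V_i`. -/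
def doubleMycielskian {W : Type*} (H : SimpleGraph W) :
    SimpleGraph (W ⊕ ((Bool × W) ⊕ Bool)) :=
  SimpleGraph.fromRel (fun a b =>
    (∃ x y, a = Sum.inl x ∧ b = Sum.inl y ∧ H.Adj x y) ∨
    (∃ (i : Bool) (x y : W), a = Sum.inr (Sum.inl (i, x)) ∧ b = Sum.inl y ∧ H.Adj x y) ∨
    (∃ (i : Bool) (x : W), a = Sum.inr (Sum.inr i) ∧ b = Sum.inr (Sum.inl (i, x))) ∨
    (a = Sum.inr (Sum.inr true) ∧ b = Sum.inr (Sum.inr false)))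

/-- The vertex type of `G^3_k(p,q)`: the result of `n` applications of the double
Mycielskian construction to the four vertices of the path `(p, x, y, q)`. -/
def G3Vert : ℕ → Type
  | 0 => Fin 4
  | n + 1 => G3Vert n ⊕ ((Bool × G3Vert n) ⊕ Bool)

instance G3Vert.instDecidableEq : ∀ n, DecidableEq (G3Vert n)
  | 0 => inferInstanceAs (DecidableEq (Fin 4))
  | n + 1 =>
    letI := G3Vert.instDecidableEq n
    inferInstanceAs (DecidableEq (G3Vert n ⊕ ((Bool × G3Vert n) ⊕ Bool)))

/-- The graph obtained from the path `(p, x, y, q)` on four vertices by applying the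
double Mycielskian operation `n` times. -/
def G3Graph : (n : ℕ) → SimpleGraph (G3Vert n)
  | 0 => SimpleGraph.pathGraph 4
  | n + 1 => doubleMycielskian (G3Graph n)

/-- The canonical copy of an original path vertex inside the iterated double
Mycielskian. -/
def G3emb : (n : ℕ) → Fin 4 → G3Vert n
  | 0 => id
  | n + 1 => fun i => Sum.inl (G3emb n i)
open SimpleGraph Sum

variable {W : Type*} {H : SimpleGraph W}

lemma dm_adj_inl_inl {x y : W} :
    (doubleMycielskian H).Adj (inl x) (inl y) ↔ H.Adj x y := by
  constructor
  · rintro ⟨hne, h | h⟩ <;> simp_all [doubleMycielskian] <;> first | exact h.symm | aesop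
  · intro h
    exact ⟨by simp [H.ne_of_adj h], Or.inl (Or.inl ⟨x, y, rfl, rfl, h⟩)⟩

lemma dm_adj_copy_inl {i : Bool} {x y : W} :
    (doubleMycielskian H).Adj (inr (inl (i, x))) (inl y) ↔ H.Adj x y := by
  constructor
  · rintro ⟨hne, h | h⟩ <;> simp_all [doubleMycielskian] <;> first | exact h.symm | aesop
  · intro h
    exact ⟨by simp, Or.inl (Or.inr (Or.inl ⟨i, x, y, rfl, rfl, h⟩))⟩

lemma dm_adj_apex_copy {i j : Bool} {x : W} :
    (doubleMycielskian H).Adj (inr (inr i)) (inr (inl (j, x))) ↔ i = j := by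
  constructor
  · rintro ⟨hne, h | h⟩ <;> simp_all [doubleMycielskian] <;> first | exact h.symm | aesop
  · rintro rfl
    exact ⟨by simp, Or.inl (Or.inr (Or.inr (Or.inl ⟨i, x, rfl, rfl⟩)))⟩

lemma dm_adj_apex_apex {i j : Bool} :
    (doubleMycielskian H).Adj (inr (inr i)) (inr (inr j)) ↔ i ≠ j := by
  constructor
  · rintro ⟨hne, h | h⟩ <;> simp_all [doubleMycielskian] <;> first | exact h.symm | aesop
  · intro h
    match i, j with
    | true, false => exact ⟨by simp, Or.inl (Or.inr (Or.inr (Or.inr ⟨rfl, rfl⟩)))⟩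
    | false, true => exact ⟨by simp, Or.inr (Or.inr (Or.inr (Or.inr ⟨rfl, rfl⟩)))⟩
    | true, true => simp at h
    | false, false => simp at h

lemma dm_not_adj_copy_copy {p q : Bool × W} :
    ¬ (doubleMycielskian H).Adj (inr (inl p)) (inr (inl q)) := by
  rintro ⟨hne, h | h⟩ <;> simp_all [doubleMycielskian]

lemma dm_not_adj_inl_apex {x : W} {i : Bool} :
    ¬ (doubleMycielskian H).Adj (inl x) (inr (inr i)) := by
  rintro ⟨hne, h | h⟩ <;> simp_all [doubleMycielskian]
lemma dm_cliqueFree (hH : H.CliqueFree 3) : (doubleMycielskian H).CliqueFree 3 := by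
  classical
  intro s hs
  rw [is3Clique_iff] at hs
  obtain ⟨a, b, c, hab, hac, hbc, -⟩ := hs
  -- eliminate apexes
  have noApex : ∀ u v w : W ⊕ ((Bool × W) ⊕ Bool), (doubleMycielskian H).Adj u v →
      (doubleMycielskian H).Adj u w → (doubleMycielskian H).Adj v w →
      (∃ i, u = inr (inr i)) → False := by
    rintro u v w huv huw hvw ⟨i, rfl⟩
    match v, w with
    | inl x, _ => exact dm_not_adj_inl_apex huv.symm
    | _, inl x => exact dm_not_adj_inl_apex huw.symm
    | inr (inl p), inr (inl q) => exact dm_not_adj_copy_copy hvw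
    | inr (inr j), inr (inr l) =>
        exact (dm_adj_apex_apex.mp huv) (by
          have h1 := dm_adj_apex_apex.mp huw
          have h2 := dm_adj_apex_apex.mp hvw
          revert h1 h2; rcases i <;> rcases j <;> rcases l <;> simp)
    | inr (inl p), inr (inr j) =>
        have := dm_adj_apex_copy.mp hvw.symm
        have h1 := dm_adj_apex_copy.mp huv
        have h2 := dm_adj_apex_apex.mp huw
        subst h1; exact h2 this.symm
    | inr (inr j), inr (inl p) =>
        have := dm_adj_apex_copy.mp hvw
        have h1 := dm_adj_apex_copy.mp huw
        have h2 := dm_adj_apex_apex.mp huv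
        subst h1; exact h2 this.symm
  -- now none of a b c is an apex; none can be two copies adjacent
  have tri : ∀ x y z : W, H.Adj x y → H.Adj x z → H.Adj y z → False := by
    intro x y z h1 h2 h3
    exact hH {x, y, z} (is3Clique_triple_iff.mpr ⟨h1, h2, h3⟩)
  match a, b, c with
  | inr (inr i), _, _ => exact noApex _ _ _ hab hac hbc ⟨i, rfl⟩
  | _, inr (inr i), _ => exact noApex _ _ _ hab.symm hbc hac ⟨i, rfl⟩
  | _, _, inr (inr i) => exact noApex _ _ _ hac.symm hbc.symm hab ⟨i, rfl⟩
  | inl x, inl y, inl z =>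
      exact tri x y z (dm_adj_inl_inl.mp hab) (dm_adj_inl_inl.mp hac) (dm_adj_inl_inl.mp hbc)
  | inl x, inl y, inr (inl (i, z)) =>
      exact tri z x y (dm_adj_copy_inl.mp hac.symm) (dm_adj_copy_inl.mp hbc.symm)
        (dm_adj_inl_inl.mp hab)
  | inl x, inr (inl (i, y)), inl z =>
      exact tri y x z (dm_adj_copy_inl.mp hab.symm) (dm_adj_copy_inl.mp hbc)
        (dm_adj_inl_inl.mp hac)
  | inr (inl (i, x)), inl y, inl z =>
      exact tri x y z (dm_adj_copy_inl.mp hab) (dm_adj_copy_inl.mp hac)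
        (dm_adj_inl_inl.mp hbc)
  | inl x, inr (inl p), inr (inl q) => exact dm_not_adj_copy_copy hbc
  | inr (inl p), inl y, inr (inl q) => exact dm_not_adj_copy_copy hac
  | inr (inl p), inr (inl q), inl z => exact dm_not_adj_copy_copy hab
  | inr (inl p), inr (inl q), inr (inl r) => exact dm_not_adj_copy_copy hab
/-- Extending a coloring to the double Mycielskian with one extra color. -/
lemma dm_colorable {m : ℕ} (f : H.Coloring (Fin (m + 1))) :
    (doubleMycielskian H).Colorable (m + 2) := by
  refine ⟨Coloring.mk (fun v => match v with
    | inl w => (f w).castSucc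
    | inr (inl (false, w)) => (f w).castSucc
    | inr (inl (true, _)) => Fin.last (m + 1)
    | inr (inr false) => Fin.last (m + 1)
    | inr (inr true) => (0 : Fin (m + 2))) ?_⟩
  intro a b hab
  have hcl : ∀ c : Fin (m + 1), c.castSucc ≠ Fin.last (m + 1) :=
    fun c => (Fin.castSucc_lt_last c).ne
  have h0l : (0 : Fin (m + 2)) ≠ Fin.last (m + 1) := by
    simp [Fin.ext_iff]
  match a, b with
  | inl x, inl y =>
      simpa using fun h => (f.valid (dm_adj_inl_inl.mp hab)) (Fin.castSucc_injective _ h)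
  | inl x, inr (inl (false, y)) =>
      simpa using fun h => (f.valid (dm_adj_copy_inl.mp hab.symm).symm)
        (Fin.castSucc_injective _ h)
  | inr (inl (false, y)), inl x =>
      simpa using fun h => (f.valid (dm_adj_copy_inl.mp hab)) (Fin.castSucc_injective _ h)
  | inl x, inr (inl (true, y)) => exact hcl _
  | inr (inl (true, y)), inl x => exact (hcl _).symm
  | inl x, inr (inr j) => exact absurd hab dm_not_adj_inl_apex
  | inr (inr j), inl x => exact absurd hab.symm dm_not_adj_inl_apex
  | inr (inl p), inr (inl q) => exact absurd hab dm_not_adj_copy_copy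
  | inr (inl (j, y)), inr (inr l) => {
      have hlj := (dm_adj_apex_copy.mp hab.symm)
      match j, l with
      | false, false => exact hcl _
      | true, true => exact h0l.symm
      | false, true => exact absurd hlj (by simp)
      | true, false => exact absurd hlj (by simp) }
  | inr (inr l), inr (inl (j, y)) => {
      have hlj := (dm_adj_apex_copy.mp hab)
      match l, j with
      | false, false => exact (hcl _).symm
      | true, true => exact h0l
      | false, true => exact absurd hlj (by simp)
      | true, false => exact absurd hlj (by simp) }
  | inr (inr j), inr (inr l) => {
      have := dm_adj_apex_apex.mp hab
      match j, l with
      | true, false => exact h0l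
      | false, true => exact h0l.symm
      | true, true => exact absurd rfl this
      | false, false => exact absurd rfl this }

/-- Recoloring: from an (m+2)-coloring of the double Mycielskian, produce an
(m+1)-coloring of the base graph that identifies vertices whose original color
differed from the apex-i color. -/
lemma dm_recolor {m : ℕ} (f : (doubleMycielskian H).Coloring (Fin (m + 2))) (i : Bool) :
    ∃ h : H.Coloring (Fin (m + 1)), ∀ w z : W,
      f (inl w) ≠ f (inr (inr i)) → f (inl w) = f (inl z) → h w = h z := by
  classical
  set a := f (inr (inr i)) with ha
  set g : W → Fin (m + 2) := fun w =>
    if f (inl w) = a then f (inr (inl (i, w))) else f (inl w) with hg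
  have hga : ∀ w, g w ≠ a := by
    intro w
    by_cases hc : f (inl w) = a
    · simp only [hg, if_pos hc]
      exact (f.valid ((dm_adj_apex_copy (i := i) (j := i)).mpr rfl)).symm
    · simpa only [hg, if_neg hc] using hc
  have hgp : ∀ w z, H.Adj w z → g w ≠ g z := by
    intro w z hwz
    by_cases hw : f (inl w) = a <;> by_cases hz : f (inl z) = a
    · exact absurd (hw.trans hz.symm) (f.valid (dm_adj_inl_inl.mpr hwz))
    · simp only [hg, if_pos hw, if_neg hz]
      exact f.valid (dm_adj_copy_inl.mpr hwz)
    · simp only [hg, if_neg hw, if_pos hz]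
      exact fun h => (f.valid (dm_adj_copy_inl.mpr hwz.symm)) h.symm
    · simp only [hg, if_neg hw, if_neg hz]
      exact f.valid (dm_adj_inl_inl.mpr hwz)
  have hsome : ∀ w, ∃ x, finSuccEquiv' a (g w) = some x := by
    intro w
    rcases Option.eq_none_or_eq_some (finSuccEquiv' a (g w)) with h | h
    · exact absurd ((finSuccEquiv' a).injective (h.trans (finSuccEquiv'_at a).symm))
        (hga w)
    · exact h
  refine ⟨Coloring.mk (fun w => (finSuccEquiv' a (g w)).getD 0) ?_, ?_⟩
  · intro w z hwz h
    obtain ⟨x, hx⟩ := hsome w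
    obtain ⟨y, hy⟩ := hsome z
    simp only [hx, hy, Option.getD_some] at h
    have : (finSuccEquiv' a) (g w) = (finSuccEquiv' a) (g z) := by rw [hx, hy, h]
    exact hgp w z hwz ((finSuccEquiv' a).injective this)
  · intro w z hwa hwzeq
    have hza : f (inl z) ≠ a := hwzeq ▸ hwa
    have hgeq : g w = g z := by
      simp only [hg]
      rw [if_neg hwa, if_neg hza, hwzeq]
    show ((finSuccEquiv' a) (g w)).getD 0 = ((finSuccEquiv' a) (g z)).getD 0
    rw [hgeq]
lemma base_cliqueFree : (SimpleGraph.pathGraph 4).CliqueFree 3 := by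
  intro s hs
  rw [is3Clique_iff] at hs
  obtain ⟨a, b, c, hab, hac, hbc, -⟩ := hs
  rw [pathGraph_adj] at hab hac hbc
  omega

def base_coloring : (SimpleGraph.pathGraph 4).Coloring (Fin 2) :=
  Coloring.mk (fun v => ⟨v.val % 2, by omega⟩) (by
    intro v w hvw
    rw [pathGraph_adj] at hvw
    simp only [ne_eq, Fin.mk.injEq]
    omega)

lemma base_not_colorable : ¬ (SimpleGraph.pathGraph 4).Colorable 1 := by
  rintro ⟨C⟩
  have h01 : (SimpleGraph.pathGraph 4).Adj 0 1 := by
    rw [pathGraph_adj]; decide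
  exact C.valid h01 (Subsingleton.elim _ _)

lemma base_sep (C : (SimpleGraph.pathGraph 4).Coloring (Fin 2)) : C 0 ≠ C 3 := by
  have h01 := C.valid (show (SimpleGraph.pathGraph 4).Adj 0 1 by rw [pathGraph_adj]; decide)
  have h12 := C.valid (show (SimpleGraph.pathGraph 4).Adj 1 2 by rw [pathGraph_adj]; decide)
  have h23 := C.valid (show (SimpleGraph.pathGraph 4).Adj 2 3 by rw [pathGraph_adj]; decide)
  have b0 := (C 0).isLt
  have b1 := (C 1).isLt
  have b2 := (C 2).isLt
  have b3 := (C 3).isLt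
  simp only [ne_eq, Fin.ext_iff] at *
  omega

lemma G3_main (n : ℕ) :
    (G3Graph n).CliqueFree 3 ∧ (G3Graph n).Colorable (n + 2) ∧
    ¬ (G3Graph n).Colorable (n + 1) ∧
    ∀ C : (G3Graph n).Coloring (Fin (n + 2)), C (G3emb n 0) ≠ C (G3emb n 3) := by
  induction n with
  | zero =>
      refine ⟨base_cliqueFree, ⟨base_coloring⟩, base_not_colorable, ?_⟩
      intro C
      exact base_sep C
  | succ n ih =>
      obtain ⟨hcf, hcol, hncol, hsep⟩ := ih
      have hG : G3Graph (n + 1) = doubleMycielskian (G3Graph n) := rfl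
      refine ⟨?_, ?_, ?_, ?_⟩
      · rw [hG]; exact dm_cliqueFree hcf
      · obtain ⟨f⟩ := hcol
        exact ⟨(dm_colorable f).some⟩
      · rintro ⟨f⟩
        obtain ⟨h, -⟩ := dm_recolor (H := G3Graph n)
          (show (doubleMycielskian (G3Graph n)).Coloring (Fin (n + 2)) from f) true
        exact hncol ⟨h⟩
      · show ∀ C : (doubleMycielskian (G3Graph n)).Coloring (Fin (n + 1 + 2)),
          C (inl (G3emb n 0)) ≠ C (inl (G3emb n 3))
        intro C heq
        have hT : C (inr (inr true)) ≠ C (inr (inr false)) :=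
          C.valid (dm_adj_apex_apex.mpr (by simp))
        obtain ⟨i, hi⟩ : ∃ i : Bool, C (inl (G3emb n 0)) ≠ C (inr (inr i)) := by
          by_cases h : C (inl (G3emb n 0)) = C (inr (inr true))
          · exact ⟨false, fun hf => hT (h ▸ hf ▸ rfl)⟩
          · exact ⟨true, h⟩
        obtain ⟨h, hprop⟩ := dm_recolor C i
        exact hsep h (hprop (G3emb n 0) (G3emb n 3) hi heq)

theorem statement9 (k : ℕ) (hk : 3 ≤ k) :
    (G3Graph (k - 1)).CliqueFree 3 ∧
    (G3Graph (k - 1)).chromaticNumber = (k + 1 : ℕ) ∧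
    ∀ C : (G3Graph (k - 1)).Coloring (Fin (k + 1)),
      C (G3emb (k - 1) 0) ≠ C (G3emb (k - 1) 3) := by
  obtain ⟨n, rfl⟩ : ∃ n, k = n + 1 := ⟨k - 1, by omega⟩
  obtain ⟨hcf, hcol, hncol, hsep⟩ := G3_main n
  refine ⟨hcf, ?_, fun C => hsep C⟩
  refine le_antisymm ?_ ?_
  · exact hcol.chromaticNumber_le
  · have hlt : ((n + 1 : ℕ) : ℕ∞) < (G3Graph n).chromaticNumber := by
      by_contra hle
      exact hncol (chromaticNumber_le_iff_colorable.mp (not_lt.mp hle))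
    calc ((n + 1 + 1 : ℕ) : ℕ∞) = ((n + 1 : ℕ) : ℕ∞) + 1 := by push_cast; ring
      _ ≤ (G3Graph n).chromaticNumber := ENat.natCast_add_one_le_iff.mpr hlt
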